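/- Let E be a complete real inner product space and let g1, g2 ∈ E with g2 ≠ 0. Define g̃1 = g1 - δ(⟪g1,g2⟫ < 0)·(⟪g1,g2⟫/‖g2‖²)·g2. Then g̃1 is the unique minimizer of the function x ↦ ‖g1 - x‖ over the feasible set K = {x ∈ E : ⟪x,g1⟫ ≥ 0 and ⟪x,g2⟫ ≥ 0}; that is, g̃1 ∈ K, and for every x ∈ K one has ‖g1 - g̃1‖ ≤ ‖g1 - x‖, with equality only if x = g̃1. -/

import Mathlib

open scoped RealInnerProductSpace

/-- **Lemma 1 (GH).** In a complete real inner product space, with `g2 ≠ 0`, the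
GH-harmonized gradient `g̃1 = g1 - δ(⟪g1,g2⟫ < 0) * (⟪g1,g2⟫/‖g2‖²) • g2` is the unique
minimizer of `x ↦ ‖g1 - x‖` over `K = {x | ⟪x,g1⟫ ≥ 0 ∧ ⟪x,g2⟫ ≥ 0}`. -/
theorem gh_lemma1 {E : Type*} [NormedAddCommGroup E] [InnerProductSpace ℝ E] [CompleteSpace E]
    (g1 g2 : E) (hg2 : g2 ≠ 0)
    (K : Set E) (hK : K = {x : E | 0 ≤ ⟪x, g1⟫ ∧ 0 ≤ ⟪x, g2⟫})
    (g1t : E)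
    (hg1t : g1t = g1 - ((if ⟪g1, g2⟫ < 0 then (1 : ℝ) else 0) * (⟪g1, g2⟫ / ‖g2‖ ^ 2)) • g2) :
    g1t ∈ K ∧ ∀ x ∈ K, ‖g1 - g1t‖ ≤ ‖g1 - x‖ ∧ (‖g1 - g1t‖ = ‖g1 - x‖ → x = g1t) := by
  subst hK
  by_cases h : ⟪g1, g2⟫ < 0
  · rw [if_pos h, one_mul] at hg1t
    have hg2n : (0:ℝ) < ‖g2‖ ^ 2 := pow_pos (norm_pos_iff.mpr hg2) 2
    set c : ℝ := ⟪g1, g2⟫ / ‖g2‖ ^ 2 with hc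
    have hcneg : c < 0 := div_neg_of_neg_of_pos h hg2n
    have hself : ⟪g2, g2⟫ = ‖g2‖ ^ 2 := real_inner_self_eq_norm_sq g2
    have hip2 : ⟪g1t, g2⟫ = 0 := by
      rw [hg1t, inner_sub_left, real_inner_smul_left, hself, hc]
      field_simp
      ring
    have hip1 : 0 ≤ ⟪g1t, g1⟫ := by
      have hcs := real_inner_mul_inner_self_le g1 g2
      rw [real_inner_self_eq_norm_sq, real_inner_self_eq_norm_sq] at hcs
      rw [hg1t, inner_sub_left, real_inner_smul_left, hc, sub_nonneg,
        real_inner_self_eq_norm_sq, real_inner_comm g1 g2, div_mul_eq_mul_div,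
        div_le_iff₀ hg2n]
      nlinarith [hcs]
    refine ⟨⟨hip1, le_of_eq hip2.symm⟩, fun x hx => ?_⟩
    obtain ⟨hx1, hx2⟩ := hx
    have hd : g1 - g1t = c • g2 := by rw [hg1t]; abel
    have hkey : ‖g1 - x‖ ^ 2 = ‖g1 - g1t‖ ^ 2 + 2 * (-c * ⟪x, g2⟫) + ‖g1t - x‖ ^ 2 := by
      have hsplit : g1 - x = (g1 - g1t) + (g1t - x) := by abel
      rw [hsplit, norm_add_sq_real, hd, real_inner_smul_left, inner_sub_right,
        real_inner_comm g1t g2, hip2, real_inner_comm x g2]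
      ring
    have hnn : 0 ≤ -c * ⟪x, g2⟫ := mul_nonneg (by linarith) hx2
    constructor
    · nlinarith [norm_nonneg (g1 - x), norm_nonneg (g1 - g1t), sq_nonneg ‖g1t - x‖]
    · intro heq
      have hsq : ‖g1 - g1t‖ ^ 2 = ‖g1 - x‖ ^ 2 := by rw [heq]
      have h0 : ‖g1t - x‖ ^ 2 = 0 := by nlinarith [sq_nonneg ‖g1t - x‖]
      have h1 : ‖g1t - x‖ = 0 := by nlinarith [norm_nonneg (g1t - x)]
      have h2 : g1t - x = 0 := norm_eq_zero.mp h1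
      exact (sub_eq_zero.mp h2).symm
  · rw [if_neg h, zero_mul, zero_smul, sub_zero] at hg1t
    subst hg1t
    refine ⟨⟨real_inner_self_nonneg, not_lt.mp h⟩, fun x hx => ?_⟩
    simp only [sub_self, norm_zero]
    exact ⟨norm_nonneg _, fun heq => (sub_eq_zero.mp (norm_eq_zero.mp heq.symm)).symm⟩
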